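/- In any boolean Dedekind quantale, complementation commutes with converse, (−α)° = −(α°), and the residual law α°·(−(αβ)) ≤ −β holds. -/

import Mathlib

/-- A quantale: a complete lattice with an associative, sup-preserving
multiplication with unit. -/
structure QuantaleStr (Q : Type*) [CompleteLattice Q] where
  mul : Q → Q → Q
  one : Q
  mul_assoc : ∀ a b c : Q, mul (mul a b) c = mul a (mul b c)
  one_mul : ∀ a : Q, mul one a = a
  mul_one : ∀ a : Q, mul a one = a
  mul_sSup : ∀ (a : Q) (S : Set Q), mul a (sSup S) = ⨆ b ∈ S, mul a b
  sSup_mul : ∀ (a : Q) (S : Set Q), mul (sSup S) a = ⨆ b ∈ S, mul b a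

/-- An involutive quantale. -/
structure InvQuantale (Q : Type*) [CompleteLattice Q] extends QuantaleStr Q where
  inv : Q → Q
  inv_inv : ∀ a : Q, inv (inv a) = a
  inv_sSup : ∀ S : Set Q, inv (sSup S) = ⨆ a ∈ S, inv a
  inv_mul : ∀ a b : Q, inv (mul a b) = mul (inv b) (inv a)

/-- A Dedekind quantale: an involutive quantale satisfying the Dedekind law. -/
structure DedekindQuantale (Q : Type*) [CompleteLattice Q] extends InvQuantale Q where
  dedekind : ∀ a b c : Q,
    mul a b ⊓ c ≤ mul (a ⊓ mul c (inv b)) (b ⊓ mul (inv a) c)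

/-- In a boolean Dedekind quantale, complementation commutes with converse
and the residual law holds. -/
theorem boolean_dedekind_residual {Q : Type*} [CompleteBooleanAlgebra Q]
    (X : DedekindQuantale Q) :
    (∀ a : Q, X.inv aᶜ = (X.inv a)ᶜ) ∧
    (∀ a b : Q, X.mul (X.inv a) (X.mul a b)ᶜ ≤ bᶜ) := by

  have hsup : ∀ a b : Q, X.inv (a ⊔ b) = X.inv a ⊔ X.inv b := by
    intro a b
    have h := X.inv_sSup {a, b}
    simpa [iSup_or, iSup_sup_eq] using h
  have hmono : ∀ a b : Q, a ≤ b → X.inv a ≤ X.inv b := by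
    intro a b h
    calc X.inv a ≤ X.inv a ⊔ X.inv b := le_sup_left
    _ = X.inv (a ⊔ b) := (hsup a b).symm
    _ = X.inv b := by rw [sup_eq_right.mpr h]
  have hinf : ∀ a b : Q, X.inv (a ⊓ b) = X.inv a ⊓ X.inv b := by
    intro a b
    apply le_antisymm
    · exact le_inf (hmono _ _ inf_le_left) (hmono _ _ inf_le_right)
    · have h1 : X.inv (X.inv a ⊓ X.inv b) ≤ a ⊓ b := by
        refine le_inf ?_ ?_
        · have := hmono _ _ (inf_le_left (a := X.inv a) (b := X.inv b))
          rwa [X.inv_inv] at this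
        · have := hmono _ _ (inf_le_right (a := X.inv a) (b := X.inv b))
          rwa [X.inv_inv] at this
      have := hmono _ _ h1
      rwa [X.inv_inv] at this
  have hbot : X.inv ⊥ = ⊥ := by
    have h := X.inv_sSup ∅
    simpa [iSup_or, iSup_sup_eq] using h
  have htop : X.inv ⊤ = ⊤ := by
    have := hmono (X.inv ⊤) ⊤ le_top
    rw [X.inv_inv] at this
    exact le_antisymm le_top this
  have hcompl : ∀ a : Q, X.inv aᶜ = (X.inv a)ᶜ := by
    intro a
    have hc : IsCompl (X.inv a) (X.inv aᶜ) := by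
      constructor
      · rw [disjoint_iff, ← hinf, inf_compl_eq_bot, hbot]
      · rw [codisjoint_iff, ← hsup, sup_compl_eq_top, htop]
    exact hc.compl_eq.symm
  have hmulbot : ∀ a : Q, X.mul a ⊥ = ⊥ := by
    intro a
    have h := X.mul_sSup a ∅
    simpa [iSup_or, iSup_sup_eq] using h
  refine ⟨hcompl, ?_⟩
  intro a b
  have h := X.dedekind (X.inv a) (X.mul a b)ᶜ b
  rw [X.inv_inv] at h
  have h2 : (X.mul a b)ᶜ ⊓ X.mul a b = ⊥ := compl_inf_eq_bot
  rw [h2, hmulbot] at h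
  have hdisj : Disjoint (X.mul (X.inv a) (X.mul a b)ᶜ) b := by
    rw [disjoint_iff]
    exact le_antisymm h bot_le
  exact hdisj.le_compl_right
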